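/- For a Gaussian mixture p(z) = Σᵢ wⁱ pᵢ(z) where each pᵢ(z) = N(z; μᵢ, Σ) is a multivariate Gaussian with common covariance Σ, the Hessian of g(z) = log p(z) equals p(z)⁻² Σᵢ Σⱼ χᵢχⱼ Σ⁻¹(μⱼ−μᵢ)μⱼᵀΣ⁻¹ − Σ⁻¹, where χᵢ = wⁱ pᵢ(z). -/

import Mathlib

open Matrix MeasureTheory

/-- Density of the multivariate Gaussian `N(μ, S)` on `ℝᵐ`. -/
noncomputable def gaussPdf {m : ℕ} (μ : Fin m → ℝ) (S : Matrix (Fin m) (Fin m) ℝ)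
    (z : Fin m → ℝ) : ℝ :=
  (Real.sqrt ((2 * Real.pi) ^ m * S.det))⁻¹ *
    Real.exp (-(1 / 2) * ((z - μ) ⬝ᵥ (S⁻¹ *ᵥ (z - μ))))

noncomputable def dotL {m : ℕ} (x : Fin m → ℝ) : (Fin m → ℝ) →L[ℝ] ℝ :=
  ∑ a, x a • ContinuousLinearMap.proj a

lemma dotL_apply {m : ℕ} (x u : Fin m → ℝ) : dotL x u = x ⬝ᵥ u := by
  simp [dotL, dotProduct]

lemma hasFDerivAt_quad {m : ℕ} (A : Matrix (Fin m) (Fin m) ℝ)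
    (hA : ∀ a b, A a b = A b a) (μ z : Fin m → ℝ) :
    HasFDerivAt (fun y => (y - μ) ⬝ᵥ (A *ᵥ (y - μ))) ((2:ℝ) • dotL (A *ᵥ (z - μ))) z := by
  have hfun : (fun y : Fin m → ℝ => (y - μ) ⬝ᵥ (A *ᵥ (y - μ))) =
      fun y => ∑ a, ∑ b, (y a - μ a) * (A a b * (y b - μ b)) := by
    funext y
    simp [dotProduct, mulVec, Finset.mul_sum]
  rw [hfun]
  have h1 : ∀ a b : Fin m, HasFDerivAt (fun y : Fin m → ℝ => (y a - μ a) * (A a b * (y b - μ b)))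
      ((z a - μ a) • (A a b • ContinuousLinearMap.proj b) +
        (A a b * (z b - μ b)) • (ContinuousLinearMap.proj a : (Fin m → ℝ) →L[ℝ] ℝ)) z := by
    intro a b
    have ha : HasFDerivAt (fun y : Fin m → ℝ => y a - μ a)
        (ContinuousLinearMap.proj a : (Fin m → ℝ) →L[ℝ] ℝ) z := by
      simpa using ((ContinuousLinearMap.proj a : (Fin m → ℝ) →L[ℝ] ℝ).hasFDerivAt
        (x := z)).sub_const (μ a)
    have hb : HasFDerivAt (fun y : Fin m → ℝ => A a b * (y b - μ b))
        (A a b • (ContinuousLinearMap.proj b : (Fin m → ℝ) →L[ℝ] ℝ)) z := by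
      have hb0 : HasFDerivAt (fun y : Fin m → ℝ => y b - μ b)
          (ContinuousLinearMap.proj b : (Fin m → ℝ) →L[ℝ] ℝ) z := by
        simpa using ((ContinuousLinearMap.proj b : (Fin m → ℝ) →L[ℝ] ℝ).hasFDerivAt
          (x := z)).sub_const (μ b)
      simpa [smul_smul] using hb0.const_mul (A a b)
    exact ha.mul hb
  have h3 := HasFDerivAt.fun_sum (fun a (_ : a ∈ Finset.univ) =>
    HasFDerivAt.fun_sum (fun b (_ : b ∈ Finset.univ) => h1 a b))
  refine h3.congr_fderiv (Eq.symm ?_)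
  ext u
  have swap : ∑ a, ∑ b, (z a - μ a) * (A a b * u b) = ∑ a, ∑ b, A a b * (z b - μ b) * u a := by
    rw [Finset.sum_comm]
    exact Finset.sum_congr rfl fun a _ => Finset.sum_congr rfl fun b _ => by rw [hA b a]; ring
  have e0 : (A *ᵥ (z - μ)) ⬝ᵥ u = ∑ a, ∑ b, A a b * (z b - μ b) * u a := by
    simp [dotProduct, mulVec, Finset.sum_mul]
  simp only [ContinuousLinearMap.smul_apply, ContinuousLinearMap.sum_apply,
    ContinuousLinearMap.add_apply, ContinuousLinearMap.proj_apply, dotL_apply, smul_eq_mul,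
    Finset.sum_add_distrib]
  rw [e0, swap]
  ring

lemma gaussPdf_pos {m : ℕ} (μ : Fin m → ℝ) {S : Matrix (Fin m) (Fin m) ℝ}
    (hS : S.PosDef) (z : Fin m → ℝ) : 0 < gaussPdf μ S z := by
  have hdet : 0 < S.det := hS.det_pos
  have h1 : 0 < (2 * Real.pi) ^ m * S.det := by positivity
  have : 0 < Real.sqrt ((2 * Real.pi) ^ m * S.det) := Real.sqrt_pos.mpr h1
  exact mul_pos (inv_pos.mpr this) (Real.exp_pos _)

lemma hasFDerivAt_gaussPdf {m : ℕ} (μ : Fin m → ℝ) {S : Matrix (Fin m) (Fin m) ℝ}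
    (hA : ∀ a b, S⁻¹ a b = S⁻¹ b a) (z : Fin m → ℝ) :
    HasFDerivAt (gaussPdf μ S) ((-(gaussPdf μ S z)) • dotL (S⁻¹ *ᵥ (z - μ))) z := by
  have hq := hasFDerivAt_quad S⁻¹ hA μ z
  have he := ((hq.const_mul (-(1/2 : ℝ))).exp).const_mul
    (Real.sqrt ((2 * Real.pi) ^ m * S.det))⁻¹
  have : (gaussPdf μ S) = fun y => (Real.sqrt ((2 * Real.pi) ^ m * S.det))⁻¹ *
      Real.exp (-(1 / 2) * ((y - μ) ⬝ᵥ (S⁻¹ *ᵥ (y - μ)))) := rfl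
  rw [this]
  refine he.congr_fderiv (Eq.symm ?_)
  rw [smul_smul, smul_smul, smul_smul]
  congr 1
  simp [gaussPdf]

lemma hasFDerivAt_chi {m : ℕ} (w : ℝ) (μ : Fin m → ℝ) {S : Matrix (Fin m) (Fin m) ℝ}
    (hA : ∀ a b, S⁻¹ a b = S⁻¹ b a) (z : Fin m → ℝ) :
    HasFDerivAt (fun y => w * gaussPdf μ S y)
      ((-(w * gaussPdf μ S z)) • dotL (S⁻¹ *ᵥ (z - μ))) z := by
  have := (hasFDerivAt_gaussPdf μ hA z).const_mul w
  refine this.congr_fderiv (Eq.symm ?_)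
  ext u
  simp [dotL_apply]
  ring

/-- The derivative CLM of the mixture density. -/
noncomputable def Pd {m N : ℕ} (w : Fin N → ℝ) (μ : Fin N → Fin m → ℝ)
    (S : Matrix (Fin m) (Fin m) ℝ) (y : Fin m → ℝ) : (Fin m → ℝ) →L[ℝ] ℝ :=
  ∑ i, (-(w i * gaussPdf (μ i) S y)) • dotL (S⁻¹ *ᵥ (y - μ i))

lemma hasFDerivAt_p {m N : ℕ} (w : Fin N → ℝ) (μ : Fin N → Fin m → ℝ)
    {S : Matrix (Fin m) (Fin m) ℝ} (hA : ∀ a b, S⁻¹ a b = S⁻¹ b a) (z : Fin m → ℝ) :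
    HasFDerivAt (fun y => ∑ i, w i * gaussPdf (μ i) S y) (Pd w μ S z) z :=
  HasFDerivAt.fun_sum (fun i _ => hasFDerivAt_chi (w i) (μ i) hA z)

noncomputable def Gd {m N : ℕ} (w : Fin N → ℝ) (μ : Fin N → Fin m → ℝ)
    (S : Matrix (Fin m) (Fin m) ℝ) (y : Fin m → ℝ) : (Fin m → ℝ) →L[ℝ] ℝ :=
  (∑ i, w i * gaussPdf (μ i) S y)⁻¹ • Pd w μ S y

lemma fderiv_log_p {m N : ℕ} (w : Fin N → ℝ) (μ : Fin N → Fin m → ℝ)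
    {S : Matrix (Fin m) (Fin m) ℝ} (hA : ∀ a b, S⁻¹ a b = S⁻¹ b a)
    (hpos : ∀ y, 0 < ∑ i, w i * gaussPdf (μ i) S y) :
    fderiv ℝ (fun x => Real.log (∑ i, w i * gaussPdf (μ i) S x)) = Gd w μ S := by
  funext y
  exact ((hasFDerivAt_p w μ hA y).log (hpos y).ne').fderiv

/-- linearity helper -/
lemma diff_dotL_mulVec {m : ℕ} (A : Matrix (Fin m) (Fin m) ℝ) :
    Differentiable ℝ (fun y : Fin m → ℝ => dotL (A *ᵥ y)) := by
  have : IsLinearMap ℝ (fun y : Fin m → ℝ => dotL (A *ᵥ y)) := by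
    constructor
    · intro x y; ext u; simp [dotL_apply, Matrix.mulVec_add, add_dotProduct]
    · intro c x; ext u; simp [dotL_apply, Matrix.mulVec_smul, smul_dotProduct]
  exact (this.mk' _).toContinuousLinearMap.differentiable

lemma diff_Pd {m N : ℕ} (w : Fin N → ℝ) (μ : Fin N → Fin m → ℝ)
    {S : Matrix (Fin m) (Fin m) ℝ} (hA : ∀ a b, S⁻¹ a b = S⁻¹ b a) (z : Fin m → ℝ) :
    DifferentiableAt ℝ (Pd w μ S) z := by
  apply DifferentiableAt.fun_sum
  intro i _
  apply DifferentiableAt.fun_smul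
  · exact ((hasFDerivAt_chi (w i) (μ i) hA z).differentiableAt).neg
  · have heq : (fun y : Fin m → ℝ => dotL (S⁻¹ *ᵥ (y - μ i))) =
        fun y => dotL (S⁻¹ *ᵥ y) - dotL (S⁻¹ *ᵥ μ i) := by
      funext y; ext u
      simp [dotL_apply, Matrix.mulVec_sub, sub_dotProduct]
    rw [heq]
    exact ((diff_dotL_mulVec S⁻¹) z).sub_const _

lemma diff_Gd {m N : ℕ} (w : Fin N → ℝ) (μ : Fin N → Fin m → ℝ)
    {S : Matrix (Fin m) (Fin m) ℝ} (hA : ∀ a b, S⁻¹ a b = S⁻¹ b a) (z : Fin m → ℝ)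
    (hpos : 0 < ∑ i, w i * gaussPdf (μ i) S z) :
    DifferentiableAt ℝ (Gd w μ S) z := by
  have h1 : DifferentiableAt ℝ (fun y => (∑ i, w i * gaussPdf (μ i) S y)⁻¹) z :=
    ((hasFDerivAt_p w μ hA z).differentiableAt).inv hpos.ne'
  exact h1.smul (diff_Pd w μ hA z)

lemma mulVec_dot_comm (A : Matrix (Fin m) (Fin m) ℝ) (hA : ∀ a b, A a b = A b a)
    (x y : Fin m → ℝ) : (A *ᵥ x) ⬝ᵥ y = (A *ᵥ y) ⬝ᵥ x := by
  simp only [dotProduct, mulVec, Finset.sum_mul]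
  rw [Finset.sum_comm]
  exact Finset.sum_congr rfl fun a _ => Finset.sum_congr rfl fun b _ => by
    rw [hA b a]; ring

lemma hasFDerivAt_linpart (A : Matrix (Fin m) (Fin m) ℝ) (hA : ∀ a b, A a b = A b a)
    (μ v z : Fin m → ℝ) :
    HasFDerivAt (fun y => (A *ᵥ (y - μ)) ⬝ᵥ v) (dotL (A *ᵥ v)) z := by
  have heq : (fun y : Fin m → ℝ => (A *ᵥ (y - μ)) ⬝ᵥ v) =
      fun y => dotL (A *ᵥ v) y - ((A *ᵥ μ) ⬝ᵥ v) := by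
    funext y
    rw [dotL_apply, Matrix.mulVec_sub, sub_dotProduct, mulVec_dot_comm A hA y v]
  rw [heq]
  exact (dotL (A *ᵥ v)).hasFDerivAt.sub_const _

lemma triple_entry (A : Matrix (Fin m) (Fin m) ℝ) (hA : ∀ a b, A a b = A b a)
    (x y : Fin m → ℝ) (a b : Fin m) :
    (A * vecMulVec x y * A) a b = (A *ᵥ x) a * (A *ᵥ y) b := by
  have h1 : ∀ d, (A * vecMulVec x y) a d = (A *ᵥ x) a * y d := by
    intro d
    rw [Matrix.mul_apply]
    simp only [vecMulVec_apply, mulVec, dotProduct, Finset.sum_mul]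
    exact Finset.sum_congr rfl fun c _ => by ring
  rw [Matrix.mul_apply]
  simp only [h1]
  simp only [mulVec, dotProduct, Finset.mul_sum]
  exact Finset.sum_congr rfl fun d _ => by rw [hA b d]; ring

lemma core {N : ℕ} (χ α β ma mb : Fin N → ℝ) (P ta tb Aab : ℝ)
    (hP : P = ∑ i, χ i) (hPne : P ≠ 0)
    (hα : ∀ i, α i = ta - ma i) (hβ : ∀ i, β i = tb - mb i) :
    P⁻¹ * (∑ i, (-(χ i) * Aab + β i * (χ i * α i)))
      + (∑ i, -(χ i) * β i) * (-(P^2)⁻¹ * (∑ i, -(χ i) * α i)) =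
    (P^2)⁻¹ * (∑ i, ∑ j, (χ i * χ j) * ((ma j - ma i) * mb j)) - Aab := by
  set D : Fin N → Fin N → ℝ := fun i j =>
    (χ i * (β j * (χ j * α j)) - χ i * β i * (χ j * α j)) -
      (χ i * χ j) * ((ma j - ma i) * mb j) with hD
  have hanti : ∀ i j, D i j = - D j i := by
    intro i j
    simp only [hD, hα i, hα j, hβ i, hβ j]
    ring
  have hzero : (∑ i, ∑ j, D i j) = 0 := by
    have h1 : (∑ i, ∑ j, D i j) = ∑ j, ∑ i, D i j := Finset.sum_comm
    have h2 : (∑ j, ∑ i, D i j) = -∑ i, ∑ j, D i j := by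
      rw [← Finset.sum_neg_distrib]
      refine Finset.sum_congr rfl fun i _ => ?_
      rw [← Finset.sum_neg_distrib]
      exact Finset.sum_congr rfl fun j _ => by rw [hanti j i]
    linarith [h1, h2]
  have key : P * (∑ i, β i * (χ i * α i)) - (∑ i, χ i * β i) * (∑ i, χ i * α i) =
      ∑ i, ∑ j, (χ i * χ j) * ((ma j - ma i) * mb j) := by
    rw [hP, Finset.sum_mul_sum, Finset.sum_mul_sum, ← sub_eq_zero,
      ← Finset.sum_sub_distrib, ← Finset.sum_sub_distrib]
    simp only [← Finset.sum_sub_distrib]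
    exact hzero
  have hP2 : P^2 ≠ 0 := pow_ne_zero 2 hPne
  have hsum1 : (∑ i, (-(χ i) * Aab + β i * (χ i * α i))) =
      -(P * Aab) + ∑ i, β i * (χ i * α i) := by
    rw [Finset.sum_add_distrib, hP]
    congr 1
    rw [← Finset.sum_mul, Finset.sum_neg_distrib, neg_mul]
  rw [hsum1]
  have e1 : (∑ i, -(χ i) * β i) = -(∑ i, χ i * β i) := by
    rw [← Finset.sum_neg_distrib]; exact Finset.sum_congr rfl fun i _ => by ring
  have e2 : (∑ i, -(χ i) * α i) = -(∑ i, χ i * α i) := by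
    rw [← Finset.sum_neg_distrib]; exact Finset.sum_congr rfl fun i _ => by ring
  rw [e1, e2, ← key]
  field_simp
  ring

theorem gmm_log_hessian {m N : ℕ} (w : Fin N → ℝ) (μ : Fin N → Fin m → ℝ)
    (S : Matrix (Fin m) (Fin m) ℝ) (hw : ∀ i, 0 < w i) (hsum : ∑ i, w i = 1)
    (hS : S.PosDef) (z : Fin m → ℝ)
    (p : (Fin m → ℝ) → ℝ) (hp : p = fun z => ∑ i, w i * gaussPdf (μ i) S z)
    (χ : Fin N → ℝ) (hχ : χ = fun i => w i * gaussPdf (μ i) S z) :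
    (Matrix.of fun a b : Fin m =>
        iteratedFDeriv ℝ 2 (fun z => Real.log (p z)) z ![Pi.single a 1, Pi.single b 1]) =
      ((p z) ^ 2)⁻¹ •
          (∑ i, ∑ j, (χ i * χ j) • (S⁻¹ * vecMulVec (μ j - μ i) (μ j) * S⁻¹)) - S⁻¹ := by
  subst hp hχ
  have hA : ∀ a b, S⁻¹ a b = S⁻¹ b a := by
    intro a b
    have h := congrFun (congrFun hS.inv.isHermitian b) a
    simpa [Matrix.conjTranspose_apply] using h
  have hpos : ∀ y, 0 < ∑ i, w i * gaussPdf (μ i) S y := by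
    intro y
    rcases Nat.eq_zero_or_pos N with hN | hN
    · subst hN; simp at hsum
    · have : Nonempty (Fin N) := ⟨⟨0, hN⟩⟩
      exact Finset.sum_pos (fun i _ => mul_pos (hw i) (gaussPdf_pos _ hS y))
        Finset.univ_nonempty
  have hg : fderiv ℝ (fun x => Real.log (∑ i, w i * gaussPdf (μ i) S x)) = Gd w μ S :=
    fderiv_log_p w μ hA hpos
  ext a b
  rw [Matrix.of_apply, iteratedFDeriv_two_apply]
  simp only [Matrix.cons_val_zero, Matrix.cons_val_one, Matrix.head_cons]
  rw [hg]
  have hflip : fderiv ℝ (fun y => Gd w μ S y (Pi.single b 1)) z =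
      (fderiv ℝ (Gd w μ S) z).flip (Pi.single b 1) := by
    rw [fderiv_clm_apply (diff_Gd w μ hA z (hpos z)) (differentiableAt_const _)]
    simp
  have hstep : (fderiv ℝ (Gd w μ S) z) (Pi.single a 1) (Pi.single b 1) =
      fderiv ℝ (fun y => Gd w μ S y (Pi.single b 1)) z (Pi.single a 1) := by
    rw [hflip]; rfl
  rw [hstep]
  set v : Fin m → ℝ := Pi.single b 1 with hv
  have heqfun : (fun y => Gd w μ S y v) = fun y =>
      (∑ i, w i * gaussPdf (μ i) S y)⁻¹ *
        (∑ i, (-(w i * gaussPdf (μ i) S y)) * ((S⁻¹ *ᵥ (y - μ i)) ⬝ᵥ v)) := by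
    funext y
    simp [Gd, Pd, dotL_apply, ContinuousLinearMap.sum_apply, smul_eq_mul]
  have hinv := (hasDerivAt_inv (hpos z).ne').comp_hasFDerivAt z (hasFDerivAt_p w μ hA z)
  simp only [Function.comp_def] at hinv
  have hterm := fun i => ((hasFDerivAt_chi (w i) (μ i) hA z).fun_neg).fun_mul
    (hasFDerivAt_linpart S⁻¹ hA (μ i) v z)
  have hs := HasFDerivAt.fun_sum (fun i (_ : i ∈ Finset.univ) => hterm i)
  have hmul := hinv.fun_mul hs
  rw [heqfun, hmul.fderiv]
  simp only [ContinuousLinearMap.add_apply, ContinuousLinearMap.smul_apply,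
    ContinuousLinearMap.sum_apply, ContinuousLinearMap.neg_apply, dotL_apply, smul_eq_mul,
    Pd, Matrix.sub_apply, Matrix.smul_apply, Matrix.sum_apply,
    triple_entry S⁻¹ hA]
  simp only [hv, Matrix.mulVec_single, dotProduct_single, mul_one, Matrix.mulVec_sub,
    Pi.sub_apply, Pi.smul_apply, MulOpposite.op_one, one_smul, Matrix.col_apply]
  have hfix : (∑ x, (-(w x * gaussPdf (μ x) S z) * S⁻¹ a b +
        ((S⁻¹ *ᵥ z) b - (S⁻¹ *ᵥ μ x) b) *
          -(-(w x * gaussPdf (μ x) S z) * ((S⁻¹ *ᵥ z) a - (S⁻¹ *ᵥ μ x) a)))) =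
      ∑ x, (-(w x * gaussPdf (μ x) S z) * S⁻¹ a b +
        ((S⁻¹ *ᵥ z) b - (S⁻¹ *ᵥ μ x) b) *
          ((w x * gaussPdf (μ x) S z) * ((S⁻¹ *ᵥ z) a - (S⁻¹ *ᵥ μ x) a))) :=
    Finset.sum_congr rfl fun x _ => by ring
  rw [hfix]
  exact core (fun i => w i * gaussPdf (μ i) S z)
    (fun i => (S⁻¹ *ᵥ z) a - (S⁻¹ *ᵥ μ i) a)
    (fun i => (S⁻¹ *ᵥ z) b - (S⁻¹ *ᵥ μ i) b)
    (fun i => (S⁻¹ *ᵥ μ i) a) (fun i => (S⁻¹ *ᵥ μ i) b)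
    (∑ i, w i * gaussPdf (μ i) S z) ((S⁻¹ *ᵥ z) a) ((S⁻¹ *ᵥ z) b) (S⁻¹ a b)
    rfl (hpos z).ne' (fun i => rfl) (fun i => rfl)
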